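/- For any alphabet size k ≥ 1 and n ≥ 1, the number of shuffle squares of length 2n over an alphabet of size k is at most C_n · k^n, where C_n is the n-th Catalan number. -/

import Mathlib

/-- A word `s` of length `2n` over alphabet `Fin k` is a shuffle square if it can be
partitioned into two disjoint identical subsequences of length `n`. -/
def IsShuffleSquare {n k : ℕ} (s : Fin (2 * n) → Fin k) : Prop :=
  ∃ I J : Fin n → Fin (2 * n), StrictMono I ∧ StrictMono J ∧
    (∀ r r' : Fin n, I r ≠ J r') ∧
    (∀ x : Fin (2 * n), (∃ r, I r = x) ∨ (∃ r, J r = x)) ∧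
    (∀ r : Fin n, s (I r) = s (J r))

open DyckStep

namespace ShuffleSqAux

lemma exists_normal {n k : ℕ} {s : Fin (2*n) → Fin k} (h : IsShuffleSquare s) :
    ∃ I J : Fin n → Fin (2*n), StrictMono I ∧ StrictMono J ∧
      (∀ r, I r < J r) ∧ (∀ r r', I r ≠ J r') ∧
      (∀ x, (∃ r, I r = x) ∨ (∃ r, J r = x)) ∧ (∀ r, s (I r) = s (J r)) := by
  obtain ⟨I, J, hI, hJ, hdisj, hcov, hval⟩ := h
  refine ⟨fun r => min (I r) (J r), fun r => max (I r) (J r), ?_, ?_, ?_, ?_, ?_, ?_⟩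
  · intro a b hab
    exact lt_min ((min_le_left _ _).trans_lt (hI hab)) ((min_le_right _ _).trans_lt (hJ hab))
  · intro a b hab
    exact max_lt ((hI hab).trans_le (le_max_left _ _)) ((hJ hab).trans_le (le_max_right _ _))
  · intro r; exact min_lt_max.2 (hdisj r r)
  · intro r r' he
    dsimp only at he
    rcases min_cases (I r) (J r) with ⟨h1, -⟩ | ⟨h1, -⟩ <;>
      rcases max_cases (I r') (J r') with ⟨h2, -⟩ | ⟨h2, -⟩ <;> rw [h1, h2] at he
    · have : r = r' := hI.injective he
      subst this
      have hlt := min_lt_max.2 (hdisj r r)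
      rw [h1, h2] at hlt
      exact lt_irrefl _ hlt
    · exact hdisj r r' he
    · exact hdisj r' r he.symm
    · have : r = r' := hJ.injective he
      subst this
      have hlt := min_lt_max.2 (hdisj r r)
      rw [h1, h2] at hlt
      exact lt_irrefl _ hlt
  · intro x
    dsimp only
    rcases hcov x with ⟨r, hr⟩ | ⟨r, hr⟩
    · rcases le_total (I r) (J r) with hle | hle
      · exact Or.inl ⟨r, by rw [min_eq_left hle, hr]⟩
      · exact Or.inr ⟨r, by rw [max_eq_left hle, hr]⟩
    · rcases le_total (I r) (J r) with hle | hle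
      · exact Or.inr ⟨r, by rw [max_eq_right hle, hr]⟩
      · exact Or.inl ⟨r, by rw [min_eq_right hle, hr]⟩
  · intro r
    dsimp only
    rcases le_total (I r) (J r) with hle | hle
    · rw [min_eq_left hle, max_eq_right hle]; exact hval r
    · rw [min_eq_right hle, max_eq_left hle]; exact (hval r).symm

lemma count_take_ofFn {m : ℕ} (f : Fin m → DyckStep) (d : DyckStep) :
    ∀ i, i ≤ m → ((List.ofFn f).take i).count d =
      (Finset.univ.filter fun x : Fin m => x.val < i ∧ f x = d).card := by
  intro i
  induction i with
  | zero => intro _; simp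
  | succ i ih =>
    intro hi
    have hi' : i ≤ m := Nat.le_of_succ_le hi
    have hil : i < (List.ofFn f).length := by simpa using hi
    rw [List.take_succ, List.count_append, ih hi']
    have hget : (List.ofFn f)[i]? = some (f ⟨i, hi⟩) := by
      rw [List.getElem?_eq_getElem hil]
      simp
    rw [hget]
    have hsplit : (Finset.univ.filter fun x : Fin m => x.val < i + 1 ∧ f x = d) =
        (Finset.univ.filter fun x : Fin m => x.val < i ∧ f x = d) ∪
        (Finset.univ.filter fun x : Fin m => x = ⟨i, hi⟩ ∧ f x = d) := by
      ext x
      simp only [Finset.mem_filter, Finset.mem_union, Finset.mem_univ, true_and]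
      constructor
      · rintro ⟨hx, hfx⟩
        rcases Nat.lt_succ_iff_lt_or_eq.1 hx with hx' | hx'
        · exact Or.inl ⟨hx', hfx⟩
        · exact Or.inr ⟨Fin.ext hx', hfx⟩
      · rintro (⟨hx, hfx⟩ | ⟨hx, hfx⟩)
        · exact ⟨Nat.lt_succ_of_lt hx, hfx⟩
        · exact ⟨by rw [hx]; exact Nat.lt_succ_self i, hfx⟩
    have hdisj : Disjoint (Finset.univ.filter fun x : Fin m => x.val < i ∧ f x = d)
        (Finset.univ.filter fun x : Fin m => x = ⟨i, hi⟩ ∧ f x = d) := by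
      rw [Finset.disjoint_left]
      intro x hx hx'
      simp only [Finset.mem_filter, Finset.mem_univ, true_and] at hx hx'
      rw [hx'.1] at hx
      exact lt_irrefl _ hx.1
    rw [hsplit, Finset.card_union_of_disjoint hdisj]
    congr 1
    have : (Finset.univ.filter fun x : Fin m => x = ⟨i, hi⟩ ∧ f x = d) =
        if f ⟨i, hi⟩ = d then {(⟨i, hi⟩ : Fin m)} else ∅ := by
      split_ifs with hd
      · ext x
        simp only [Finset.mem_filter, Finset.mem_univ, true_and, Finset.mem_singleton]
        exact ⟨fun hx => hx.1, fun hx => ⟨hx, by rw [hx]; exact hd⟩⟩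
      · ext x
        simp only [Finset.mem_filter, Finset.mem_univ, true_and, Finset.notMem_empty,
          iff_false, not_and]
        rintro rfl
        exact hd
    rw [this]
    rcases eq_or_ne (f ⟨i, hi⟩) d with hd | hd
    · rw [if_pos hd, Finset.card_singleton]
      simp [Option.toList, hd]
    · rw [if_neg hd, Finset.card_empty]
      simp [Option.toList, List.count_singleton', hd]

section
variable {n k : ℕ} {s : Fin (2*n) → Fin k}

/-- chosen normalized first subsequence -/
noncomputable def witI (h : IsShuffleSquare s) : Fin n → Fin (2*n) :=
  (exists_normal h).choose

/-- chosen normalized second subsequence -/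
noncomputable def witJ (h : IsShuffleSquare s) : Fin n → Fin (2*n) :=
  (exists_normal h).choose_spec.choose

lemma wit_spec (h : IsShuffleSquare s) :
    StrictMono (ShuffleSqAux.witI h) ∧ StrictMono (witJ h) ∧
      (∀ r, ShuffleSqAux.witI h r < witJ h r) ∧ (∀ r r', ShuffleSqAux.witI h r ≠ witJ h r') ∧
      (∀ x, (∃ r, ShuffleSqAux.witI h r = x) ∨ (∃ r, witJ h r = x)) ∧
      (∀ r, s (ShuffleSqAux.witI h r) = s (witJ h r)) :=
  (exists_normal h).choose_spec.choose_spec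

/-- positions of the first subsequence -/
noncomputable def posA (h : IsShuffleSquare s) : Finset (Fin (2*n)) :=
  Finset.univ.image (ShuffleSqAux.witI h)

lemma mem_posA {h : IsShuffleSquare s} {x : Fin (2*n)} :
    x ∈ posA h ↔ ∃ r, ShuffleSqAux.witI h r = x := by
  simp [posA]

lemma not_mem_posA {h : IsShuffleSquare s} {x : Fin (2*n)} :
    x ∉ posA h ↔ ∃ r, witJ h r = x := by
  rw [mem_posA]
  constructor
  · intro hx
    rcases (wit_spec h).2.2.2.2.1 x with hI | hJ
    · exact absurd hI hx
    · exact hJ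
  · rintro ⟨r, rfl⟩ ⟨r', hr'⟩
    exact (wit_spec h).2.2.2.1 r' r hr'

lemma card_posA (h : IsShuffleSquare s) : (posA h).card = n := by
  rw [posA, Finset.card_image_of_injective _ (wit_spec h).1.injective, Finset.card_univ,
    Fintype.card_fin]

open scoped Classical in
/-- the indicator word of the first subsequence -/
noncomputable def stepFn (h : IsShuffleSquare s) : Fin (2*n) → DyckStep :=
  fun x => if x ∈ posA h then U else D

open scoped Classical in
lemma count_take_stepFn (h : IsShuffleSquare s) (i : ℕ) (hi : i ≤ 2 * n) :
    ((List.ofFn (stepFn h)).take i).count U =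
      (Finset.univ.filter fun x : Fin (2*n) => x.val < i ∧ x ∈ posA h).card ∧
    ((List.ofFn (stepFn h)).take i).count D =
      (Finset.univ.filter fun x : Fin (2*n) => x.val < i ∧ x ∉ posA h).card := by
  constructor
  · rw [count_take_ofFn _ _ i hi]
    congr 1
    ext x
    rw [Finset.mem_filter, Finset.mem_filter]
    simp only [stepFn]
    constructor
    · rintro ⟨_, h1, h2⟩
      refine ⟨by assumption, h1, ?_⟩
      by_contra hx
      rw [if_neg hx] at h2
      exact absurd h2 (by simp)
    · rintro ⟨_, h1, h2⟩
      exact ⟨by assumption, h1, if_pos h2⟩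
  · rw [count_take_ofFn _ _ i hi]
    congr 1
    ext x
    rw [Finset.mem_filter, Finset.mem_filter]
    simp only [stepFn]
    constructor
    · rintro ⟨_, h1, h2⟩
      refine ⟨by assumption, h1, ?_⟩
      intro hx
      rw [if_pos hx] at h2
      exact absurd h2 (by simp)
    · rintro ⟨_, h1, h2⟩
      exact ⟨by assumption, h1, if_neg h2⟩

open scoped Classical in
lemma ballot (h : IsShuffleSquare s) (i : ℕ) :
    (Finset.univ.filter fun x : Fin (2*n) => x.val < i ∧ x ∉ posA h).card ≤
      (Finset.univ.filter fun x : Fin (2*n) => x.val < i ∧ x ∈ posA h).card := by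
  have hD : (Finset.univ.filter fun x : Fin (2*n) => x.val < i ∧ x ∉ posA h) =
      (Finset.univ.filter fun r : Fin n => (witJ h r).val < i).image (witJ h) := by
    ext x
    simp only [Finset.mem_filter, Finset.mem_image, Finset.mem_univ, true_and]
    constructor
    · rintro ⟨h1, h2⟩
      obtain ⟨r, rfl⟩ := not_mem_posA.1 h2
      exact ⟨r, h1, rfl⟩
    · rintro ⟨r, h1, rfl⟩
      exact ⟨h1, not_mem_posA.2 ⟨r, rfl⟩⟩
  have hU : (Finset.univ.filter fun x : Fin (2*n) => x.val < i ∧ x ∈ posA h) =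
      (Finset.univ.filter fun r : Fin n => (ShuffleSqAux.witI h r).val < i).image (ShuffleSqAux.witI h) := by
    ext x
    simp only [Finset.mem_filter, Finset.mem_image, Finset.mem_univ, true_and]
    constructor
    · rintro ⟨h1, h2⟩
      obtain ⟨r, rfl⟩ := mem_posA.1 h2
      exact ⟨r, h1, rfl⟩
    · rintro ⟨r, h1, rfl⟩
      exact ⟨h1, mem_posA.2 ⟨r, rfl⟩⟩
  rw [hD, hU, Finset.card_image_of_injective _ (wit_spec h).2.1.injective,
    Finset.card_image_of_injective _ (wit_spec h).1.injective]
  apply Finset.card_le_card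
  intro r hr
  simp only [Finset.mem_filter, Finset.mem_univ, true_and] at hr ⊢
  exact lt_of_le_of_lt (Nat.le_of_lt ((wit_spec h).2.2.1 r)) hr

open scoped Classical in
/-- the Dyck word of a shuffle square -/
noncomputable def dword (h : IsShuffleSquare s) : DyckWord where
  toList := List.ofFn (stepFn h)
  count_U_eq_count_D := by
    have hlen : (List.ofFn (stepFn h)).length = 2 * n := by simp
    have := count_take_stepFn h (2 * n) le_rfl
    rw [List.take_of_length_le (le_of_eq hlen)] at this
    rw [this.1, this.2]
    have hsplit : ∀ x : Fin (2*n), x.val < 2 * n := fun x => x.isLt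
    have e1 : (Finset.univ.filter fun x : Fin (2*n) => x.val < 2*n ∧ x ∈ posA h) = posA h := by
      ext x; simp [hsplit x]
    have e2 : (Finset.univ.filter fun x : Fin (2*n) => x.val < 2*n ∧ x ∉ posA h) =
        Finset.univ.filter (fun x => x ∉ posA h) := by
      ext x; simp [hsplit x]
    rw [e1, e2]
    have := Finset.card_filter_add_card_filter_not
      (s := (Finset.univ : Finset (Fin (2*n)))) (p := fun x => x ∈ posA h)
    have hcard : (Finset.univ.filter fun x : Fin (2*n) => x ∈ posA h).card = n := by
      rw [Finset.filter_univ_mem, card_posA]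
    rw [Finset.card_univ, Fintype.card_fin] at this
    rw [hcard] at this
    rw [card_posA]
    omega
  count_D_le_count_U i := by
    rcases le_or_gt i (2 * n) with hi | hi
    · have := count_take_stepFn h i hi
      rw [this.1, this.2]
      exact ballot h i
    · have hlen : (List.ofFn (stepFn h)).length = 2 * n := by simp
      rw [List.take_of_length_le (by omega)]
      have := count_take_stepFn h (2 * n) le_rfl
      rw [List.take_of_length_le (le_of_eq hlen)] at this
      rw [this.1, this.2]
      exact ballot h (2 * n)

open scoped Classical in
lemma semilength_dword (h : IsShuffleSquare s) : (ShuffleSqAux.dword h).semilength = n := by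
  have hlen : (List.ofFn (stepFn h)).length = 2 * n := by simp
  have := count_take_stepFn h (2 * n) le_rfl
  rw [List.take_of_length_le (le_of_eq hlen)] at this
  rw [DyckWord.semilength, dword, this.1]
  have e1 : (Finset.univ.filter fun x : Fin (2*n) => x.val < 2*n ∧ x ∈ posA h) = posA h := by
    ext x; simp [x.isLt]
  rw [e1, card_posA]

end

lemma catalan_pos' (n : ℕ) : 0 < catalan n := by
  rw [catalan_eq_centralBinom_div]
  exact Nat.div_pos (Nat.le_of_dvd n.centralBinom_pos n.succ_dvd_centralBinom) n.succ_pos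

open scoped Classical in
lemma main_inj {n k : ℕ} {s t : Fin (2*n) → Fin k}
    (hs : IsShuffleSquare s) (ht : IsShuffleSquare t)
    (hd : ShuffleSqAux.dword hs = ShuffleSqAux.dword ht)
    (hv : (fun r => s (ShuffleSqAux.witI hs r)) = fun r => t (ShuffleSqAux.witI ht r)) : s = t := by
  have hlist : List.ofFn (stepFn hs) = List.ofFn (stepFn ht) := congrArg DyckWord.toList hd
  have hstep : stepFn hs = stepFn ht := List.ofFn_injective hlist
  have hA : posA hs = posA ht := by
    ext x
    have hx := congrFun hstep x
    by_cases h1 : x ∈ posA hs <;> by_cases h2 : x ∈ posA ht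
    · simp [h1, h2]
    · simp only [stepFn, if_pos h1, if_neg h2] at hx
      exact absurd hx (by simp)
    · simp only [stepFn, if_neg h1, if_pos h2] at hx
      exact absurd hx (by simp)
    · simp [h1, h2]
  have hI : ShuffleSqAux.witI hs = ShuffleSqAux.witI ht := by
    have e1 := Finset.orderEmbOfFin_unique (card_posA hs)
      (f := ShuffleSqAux.witI hs) (fun r => mem_posA.2 ⟨r, rfl⟩) (wit_spec hs).1
    have e2 := Finset.orderEmbOfFin_unique (card_posA hs)
      (f := ShuffleSqAux.witI ht) (fun r => by rw [hA]; exact mem_posA.2 ⟨r, rfl⟩) (wit_spec ht).1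
    rw [e1, e2]
  have hcardB : (Finset.univ.filter fun x : Fin (2*n) => x ∉ posA hs).card = n := by
    have h0 := Finset.card_filter_add_card_filter_not
      (s := (Finset.univ : Finset (Fin (2*n)))) (p := fun x => x ∈ posA hs)
    have h1 : (Finset.univ.filter fun x : Fin (2*n) => x ∈ posA hs).card = n := by
      rw [Finset.filter_univ_mem, card_posA]
    rw [Finset.card_univ, Fintype.card_fin, h1] at h0
    omega
  have hJ : witJ hs = witJ ht := by
    have e1 := Finset.orderEmbOfFin_unique hcardB
      (f := witJ hs) (fun r => by
        simp only [Finset.mem_filter, Finset.mem_univ, true_and]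
        exact not_mem_posA.2 ⟨r, rfl⟩) (wit_spec hs).2.1
    have e2 := Finset.orderEmbOfFin_unique hcardB
      (f := witJ ht) (fun r => by
        simp only [Finset.mem_filter, Finset.mem_univ, true_and]
        rw [hA]
        exact not_mem_posA.2 ⟨r, rfl⟩) (wit_spec ht).2.1
    rw [e1, e2]
  funext x
  rcases (wit_spec hs).2.2.2.2.1 x with ⟨r, rfl⟩ | ⟨r, rfl⟩
  · have := congrFun hv r
    rw [this, ← hI]
  · have h1 : s (witJ hs r) = s (ShuffleSqAux.witI hs r) := ((wit_spec hs).2.2.2.2.2 r).symm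
    have h2 : t (ShuffleSqAux.witI ht r) = t (witJ ht r) := (wit_spec ht).2.2.2.2.2 r
    have := congrFun hv r
    rw [h1, this, h2, ← hJ]

end ShuffleSqAux

open scoped Classical in
theorem card_shuffleSquares_le (n k : ℕ) (hn : 1 ≤ n) (hk : 1 ≤ k) :
    (Finset.univ.filter (fun s : Fin (2 * n) → Fin k => IsShuffleSquare s)).card
      ≤ catalan n * k ^ n := by
  classical
  have hne : Nonempty { p : DyckWord // p.semilength = n } := by
    rw [← Fintype.card_pos_iff, DyckWord.card_dyckWord_semilength_eq_catalan]
    exact ShuffleSqAux.catalan_pos' n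
  obtain ⟨p0⟩ := hne
  haveI : NeZero k := ⟨by omega⟩
  set T := ({ p : DyckWord // p.semilength = n } × (Fin n → Fin k))
  set F : (Fin (2 * n) → Fin k) → T := fun s =>
    if h : IsShuffleSquare s then (⟨ShuffleSqAux.dword h, ShuffleSqAux.semilength_dword h⟩, fun r => s (ShuffleSqAux.witI h r))
    else (p0, fun _ => 0) with hF
  refine le_trans (Finset.card_le_card_of_injOn (t := (Finset.univ : Finset T)) F
    (fun s _ => Finset.mem_univ (F s)) ?_) ?_
  swap
  · rw [Finset.card_univ]
    have : Fintype.card T = catalan n * k ^ n := by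
      rw [Fintype.card_prod, DyckWord.card_dyckWord_semilength_eq_catalan,
        Fintype.card_fun, Fintype.card_fin, Fintype.card_fin]
    rw [this]
  · intro s hsmem t htmem he
    rw [Finset.coe_filter] at hsmem htmem
    obtain ⟨-, hs⟩ := hsmem
    obtain ⟨-, ht⟩ := htmem
    rw [hF] at he
    simp only [dif_pos hs, dif_pos ht] at he
    have he1 : ShuffleSqAux.dword hs = ShuffleSqAux.dword ht :=
      congrArg (fun z : T => (Prod.fst z).1) he
    have he2 := congrArg Prod.snd he
    exact ShuffleSqAux.main_inj hs ht he1 he2
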